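/- arXiv:2406.03597 — 3 statements merged into one kernel-verified Lean document; each statement's English description precedes it below -/
import Mathlib

section
/- Let V be a finite set and K a simplicial complex on V with K ≠ 2^V. Then the minimal non-faces of the Bier sphere Bier(K) are exactly the following sets: (i) the minimal non-faces of K (viewed as subsets of the first copy V); (ii) the minimal non-faces of the Alexander dual K̂ (viewed as subsets of the second copy V'); and (iii) the two-element sets {v, v'} for those v ∈ V such that {v} is a face of K and {v'} is a face of K̂. -/
/-- A simplicial complex on a ground type `V`: a collection of finite subsets of `V`
containing the empty set and closed under taking subsets. -/
def IsSimplicialComplex {V : Type*} (K : Set (Finset V)) : Prop :=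
  ∅ ∈ K ∧ ∀ s ∈ K, ∀ t ⊆ s, t ∈ K

/-- A minimal non-face of `K`: not a face, but all proper subsets are faces. -/
def IsMinNonFace {V : Type*} (K : Set (Finset V)) (s : Finset V) : Prop :=
  s ∉ K ∧ ∀ t ⊂ s, t ∈ K

/-- The Alexander dual of `K`, with the primed copy `V'` identified with `V`:
faces are those `τ` with `V \ τ` not a face of `K`. -/
def alexDual {V : Type*} [Fintype V] [DecidableEq V] (K : Set (Finset V)) :
    Set (Finset V) :=
  {τ | Finset.univ \ τ ∉ K}

/-- The Bier sphere of `K`: the deleted join of `K` and its Alexander dual, a complex on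
`V ⊕ V` (left summand = `V`, right summand = the primed copy `V'`). -/
def bier {V : Type*} [Fintype V] [DecidableEq V] (K : Set (Finset V)) :
    Set (Finset (V ⊕ V)) :=
  {ρ | ∃ σ τ : Finset V, σ ∈ K ∧ τ ∈ alexDual K ∧ Disjoint σ τ ∧
    ρ = σ.image Sum.inl ∪ τ.image Sum.inr}

open Finset

lemma disjSum_eq_image {V : Type*} [DecidableEq V] (s t : Finset V) :
    s.disjSum t = s.image Sum.inl ∪ t.image Sum.inr := by
  ext x; cases x <;> simp

lemma toLeft_image_inl {V : Type*} [DecidableEq V] (s : Finset V) :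
    (s.image Sum.inl : Finset (V ⊕ V)).toLeft = s := by
  ext x; simp

lemma toRight_image_inl {V : Type*} [DecidableEq V] (s : Finset V) :
    (s.image Sum.inl : Finset (V ⊕ V)).toRight = ∅ := by
  ext x; simp

lemma toLeft_image_inr {V : Type*} [DecidableEq V] (s : Finset V) :
    (s.image Sum.inr : Finset (V ⊕ V)).toLeft = ∅ := by
  ext x; simp

lemma toRight_image_inr {V : Type*} [DecidableEq V] (s : Finset V) :
    (s.image Sum.inr : Finset (V ⊕ V)).toRight = s := by
  ext x; simp

lemma eq_disjSum_self {V : Type*} [DecidableEq V] (ρ : Finset (V ⊕ V)) :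
    ρ = ρ.toLeft.image Sum.inl ∪ ρ.toRight.image Sum.inr := by
  rw [← disjSum_eq_image, toLeft_disjSum_toRight]

lemma eq_image_inl_of_toRight_empty {V : Type*} [DecidableEq V] {ρ : Finset (V ⊕ V)}
    (h : ρ.toRight = ∅) : ρ = ρ.toLeft.image Sum.inl := by
  ext x
  cases x with
  | inl a => simp
  | inr b =>
    simp only [Finset.mem_image, and_false, exists_false, iff_false, reduceCtorEq]
    intro hb
    have : b ∈ ρ.toRight := Finset.mem_toRight.2 hb
    rw [h] at this
    simp at this

lemma eq_image_inr_of_toLeft_empty {V : Type*} [DecidableEq V] {ρ : Finset (V ⊕ V)}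
    (h : ρ.toLeft = ∅) : ρ = ρ.toRight.image Sum.inr := by
  ext x
  cases x with
  | inr b => simp
  | inl a =>
    simp only [Finset.mem_image, and_false, exists_false, iff_false, reduceCtorEq]
    intro ha
    have : a ∈ ρ.toLeft := Finset.mem_toLeft.2 ha
    rw [h] at this
    simp at this

lemma mem_bier_iff {V : Type*} [Fintype V] [DecidableEq V] (K : Set (Finset V))
    (ρ : Finset (V ⊕ V)) :
    ρ ∈ bier K ↔ ρ.toLeft ∈ K ∧ ρ.toRight ∈ alexDual K ∧ Disjoint ρ.toLeft ρ.toRight := by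
  constructor
  · rintro ⟨σ, τ, hσ, hτ, hd, rfl⟩
    rw [← disjSum_eq_image]
    simpa using ⟨hσ, hτ, hd⟩
  · rintro ⟨h1, h2, h3⟩
    exact ⟨ρ.toLeft, ρ.toRight, h1, h2, h3, eq_disjSum_self ρ⟩

lemma image_inl_ssubset {V : Type*} [DecidableEq V] {s t : Finset V} :
    s.image Sum.inl ⊂ t.image (Sum.inl : V → V ⊕ V) ↔ s ⊂ t := by
  rw [show (Sum.inl : V → V ⊕ V) = (⟨Sum.inl, Sum.inl_injective⟩ : V ↪ V ⊕ V) from rfl,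
    ← map_eq_image, ← map_eq_image, Finset.map_ssubset_map]

lemma image_inr_ssubset {V : Type*} [DecidableEq V] {s t : Finset V} :
    s.image Sum.inr ⊂ t.image (Sum.inr : V → V ⊕ V) ↔ s ⊂ t := by
  rw [show (Sum.inr : V → V ⊕ V) = (⟨Sum.inr, Sum.inr_injective⟩ : V ↪ V ⊕ V) from rfl,
    ← map_eq_image, ← map_eq_image, Finset.map_ssubset_map]

/-- description of the minimal non-faces of the Bier sphere. -/
theorem minNonFaces_bier {V : Type*} [Fintype V] [DecidableEq V] (K : Set (Finset V))
    (hK : IsSimplicialComplex K) (hne : K ≠ Set.univ) :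
    ∀ ρ : Finset (V ⊕ V), IsMinNonFace (bier K) ρ ↔
      ((∃ s : Finset V, IsMinNonFace K s ∧ ρ = s.image Sum.inl) ∨
       (∃ t : Finset V, IsMinNonFace (alexDual K) t ∧ ρ = t.image Sum.inr) ∨
       (∃ v : V, ({v} : Finset V) ∈ K ∧ ({v} : Finset V) ∈ alexDual K ∧
          ρ = {Sum.inl v, Sum.inr v})) := by
  have huniv : (Finset.univ : Finset V) ∉ K := by
    intro h
    apply hne
    ext s
    simp only [Set.mem_univ, iff_true]
    exact hK.2 _ h s (Finset.subset_univ s)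
  have hempty : (∅ : Finset V) ∈ alexDual K := by
    simpa [alexDual] using huniv
  have hADdown : ∀ t ∈ alexDual K, ∀ t' ⊆ t, t' ∈ alexDual K := by
    intro t ht t' hsub hmem
    exact ht (hK.2 _ hmem _ (Finset.sdiff_subset_sdiff (Finset.Subset.refl _) hsub))
  intro ρ
  constructor
  · rintro ⟨hnf, hmin⟩
    by_cases hbR : ρ.toRight = ∅
    · -- purely left
      left
      refine ⟨ρ.toLeft, ⟨?_, ?_⟩, ?_⟩
      · intro hmem
        exact hnf ((mem_bier_iff K ρ).2 ⟨hmem, by rw [hbR]; exact hempty, by simp [hbR]⟩)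
      · intro t ht
        have h1 : t.image Sum.inl ⊂ ρ := by
          rw [eq_image_inl_of_toRight_empty hbR]
          exact image_inl_ssubset.2 ht
        have := ((mem_bier_iff K _).1 (hmin _ h1)).1
        rwa [toLeft_image_inl] at this
      · exact eq_image_inl_of_toRight_empty hbR
    by_cases hbL : ρ.toLeft = ∅
    · -- purely right
      right; left
      refine ⟨ρ.toRight, ⟨?_, ?_⟩, ?_⟩
      · intro hmem
        exact hnf ((mem_bier_iff K ρ).2 ⟨by rw [hbL]; exact hK.1, hmem, by simp [hbL]⟩)
      · intro t ht
        have h1 : t.image Sum.inr ⊂ ρ := by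
          rw [eq_image_inr_of_toLeft_empty hbL]
          exact image_inr_ssubset.2 ht
        have := ((mem_bier_iff K _).1 (hmin _ h1)).2.1
        rwa [toRight_image_inr] at this
      · exact eq_image_inr_of_toLeft_empty hbL
    · -- mixed
      right; right
      obtain ⟨w, hw⟩ := Finset.nonempty_iff_ne_empty.2 hbR
      obtain ⟨u, hu⟩ := Finset.nonempty_iff_ne_empty.2 hbL
      have hnd : ¬ Disjoint ρ.toLeft ρ.toRight := by
        intro hd
        have := (mem_bier_iff K ρ).not.1 hnf
        push_neg at this
        rcases (by tauto : ρ.toLeft ∉ K ∨ ρ.toRight ∉ alexDual K) with h | h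
        · have hsub : ρ.toLeft.image Sum.inl ⊂ ρ := by
            constructor
            · intro x hx
              simp only [Finset.mem_image, Finset.mem_toLeft] at hx
              obtain ⟨y, hy, rfl⟩ := hx
              exact hy
            · intro hcon
              have : Sum.inr w ∈ ρ.toLeft.image Sum.inl := hcon (by simpa using hw)
              simp at this
          have := ((mem_bier_iff K _).1 (hmin _ hsub)).1
          rw [toLeft_image_inl] at this
          exact h this
        · have hsub : ρ.toRight.image Sum.inr ⊂ ρ := by
            constructor
            · intro x hx
              simp only [Finset.mem_image, Finset.mem_toRight] at hx
              obtain ⟨y, hy, rfl⟩ := hx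
              exact hy
            · intro hcon
              have : Sum.inl u ∈ ρ.toRight.image Sum.inr := hcon (by simpa using hu)
              simp at this
          have := ((mem_bier_iff K _).1 (hmin _ hsub)).2.1
          rw [toRight_image_inr] at this
          exact h this
      rw [Finset.not_disjoint_iff] at hnd
      obtain ⟨v, hv1, hv2⟩ := hnd
      rw [Finset.mem_toLeft] at hv1
      rw [Finset.mem_toRight] at hv2
      have hsub : ({Sum.inl v, Sum.inr v} : Finset (V ⊕ V)) ⊆ ρ := by
        intro x hx
        simp only [Finset.mem_insert, Finset.mem_singleton] at hx
        rcases hx with rfl | rfl <;> assumption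
      have heq : ρ = {Sum.inl v, Sum.inr v} := by
        by_contra hcon
        have hss : ({Sum.inl v, Sum.inr v} : Finset (V ⊕ V)) ⊂ ρ :=
          ⟨hsub, fun h => hcon (Finset.Subset.antisymm h hsub)⟩
        have := ((mem_bier_iff K _).1 (hmin _ hss))
        have hL : ({Sum.inl v, Sum.inr v} : Finset (V ⊕ V)).toLeft = {v} := by
          ext x; simp
        have hR : ({Sum.inl v, Sum.inr v} : Finset (V ⊕ V)).toRight = {v} := by
          ext x; simp
        rw [hL, hR] at this
        simpa using this.2.2
      refine ⟨v, ?_, ?_, heq⟩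
      · have hss : ({Sum.inl v} : Finset (V ⊕ V)) ⊂ ρ := by
          rw [heq]
          constructor
          · intro x hx; simp only [Finset.mem_singleton] at hx; simp [hx]
          · intro h
            have := h (show Sum.inr v ∈ ({Sum.inl v, Sum.inr v} : Finset (V ⊕ V)) by simp)
            simp at this
        have := ((mem_bier_iff K _).1 (hmin _ hss)).1
        have hL : ({Sum.inl v} : Finset (V ⊕ V)).toLeft = {v} := by ext x; simp
        rwa [hL] at this
      · have hss : ({Sum.inr v} : Finset (V ⊕ V)) ⊂ ρ := by
          rw [heq]
          constructor
          · intro x hx; simp only [Finset.mem_singleton] at hx; simp [hx]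
          · intro h
            have := h (show Sum.inl v ∈ ({Sum.inl v, Sum.inr v} : Finset (V ⊕ V)) by simp)
            simp at this
        have := ((mem_bier_iff K _).1 (hmin _ hss)).2.1
        have hR : ({Sum.inr v} : Finset (V ⊕ V)).toRight = {v} := by ext x; simp
        rwa [hR] at this
  · rintro (⟨s, ⟨hs1, hs2⟩, rfl⟩ | ⟨t, ⟨ht1, ht2⟩, rfl⟩ | ⟨v, hv1, hv2, rfl⟩)
    · constructor
      · intro h
        have := ((mem_bier_iff K _).1 h).1
        rw [toLeft_image_inl] at this
        exact hs1 this
      · intro t ht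
        have htR : t.toRight = ∅ := by
          have := Finset.toRight_subset_toRight ht.1
          rw [toRight_image_inl] at this
          exact Finset.subset_empty.1 this
        have htL : t.toLeft ⊂ s := by
          refine ⟨?_, ?_⟩
          · have := Finset.toLeft_subset_toLeft ht.1
            rwa [toLeft_image_inl] at this
          · intro h
            apply ht.2
            intro x hx
            simp only [Finset.mem_image] at hx
            obtain ⟨y, hy, rfl⟩ := hx
            have : y ∈ t.toLeft := h hy
            rwa [Finset.mem_toLeft] at this
        exact (mem_bier_iff K t).2 ⟨hs2 _ htL, by rw [htR]; exact hempty, by simp [htR]⟩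
    · constructor
      · intro h
        have := ((mem_bier_iff K _).1 h).2.1
        rw [toRight_image_inr] at this
        exact ht1 this
      · intro u hu
        have huL : u.toLeft = ∅ := by
          have := Finset.toLeft_subset_toLeft hu.1
          rw [toLeft_image_inr] at this
          exact Finset.subset_empty.1 this
        have huR : u.toRight ⊂ t := by
          refine ⟨?_, ?_⟩
          · have := Finset.toRight_subset_toRight hu.1
            rwa [toRight_image_inr] at this
          · intro h
            apply hu.2
            intro x hx
            simp only [Finset.mem_image] at hx
            obtain ⟨y, hy, rfl⟩ := hx
            have : y ∈ u.toRight := h hy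
            rwa [Finset.mem_toRight] at this
        exact (mem_bier_iff K u).2 ⟨by rw [huL]; exact hK.1, ht2 _ huR, by simp [huL]⟩
    · constructor
      · intro h
        have := ((mem_bier_iff K _).1 h).2.2
        have hL : ({Sum.inl v, Sum.inr v} : Finset (V ⊕ V)).toLeft = {v} := by ext x; simp
        have hR : ({Sum.inl v, Sum.inr v} : Finset (V ⊕ V)).toRight = {v} := by ext x; simp
        rw [hL, hR] at this
        simp at this
      · intro t ht
        have hL : t.toLeft ⊆ {v} := by
          have := Finset.toLeft_subset_toLeft ht.1
          rwa [show ({Sum.inl v, Sum.inr v} : Finset (V ⊕ V)).toLeft = {v} by ext x; simp] at this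
        have hR : t.toRight ⊆ {v} := by
          have := Finset.toRight_subset_toRight ht.1
          rwa [show ({Sum.inl v, Sum.inr v} : Finset (V ⊕ V)).toRight = {v} by ext x; simp] at this
        have hne' : Sum.inl v ∉ t ∨ Sum.inr v ∉ t := by
          by_contra hcon
          push_neg at hcon
          apply ht.2
          intro x hx
          simp only [Finset.mem_insert, Finset.mem_singleton] at hx
          rcases hx with rfl | rfl
          exacts [hcon.1, hcon.2]
        refine (mem_bier_iff K t).2 ⟨hK.2 _ hv1 _ hL, hADdown _ hv2 _ hR, ?_⟩
        rcases hne' with h | h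
        · have : t.toLeft = ∅ := by
            rw [Finset.eq_empty_iff_forall_notMem]
            intro x hx
            have := hL hx
            simp only [Finset.mem_singleton] at this
            subst this
            exact h (Finset.mem_toLeft.1 hx)
          simp [this]
        · have : t.toRight = ∅ := by
            rw [Finset.eq_empty_iff_forall_notMem]
            intro x hx
            have := hR hx
            simp only [Finset.mem_singleton] at this
            subst this
            exact h (Finset.mem_toRight.1 hx)
          simp [this]
end

section
/- Let m ≥ 2 and let K₁ and K₂ be simplicial complexes on the set [m] = {1, …, m}, and let K be their deleted join, the simplicial complex on [m] ⊔ [m]' whose faces are the sets σ ∪ τ' with σ ∈ K₁, τ' ∈ K₂ (on the primed copy) and σ ∩ τ = ∅. Suppose every face of K has at most m − 1 elements. Define λ : [m] ⊔ [m]' → ℤ^{m−1} by λ(i) = λ(i') = e_i for 1 ≤ i ≤ m − 1 and λ(m) = λ(m') = e₁ + e₂ + ⋯ + e_{m−1}. Then for every face ρ of K, the family of vectors (λ(w))_{w ∈ ρ} can be extended to a ℤ-basis of ℤ^{m−1}; in particular these vectors are ℤ-linearly independent. -/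
/-- The deleted join of two simplicial complexes on the same ground set. -/
def deletedJoin {V : Type*} [DecidableEq V] (K₁ K₂ : Set (Finset V)) :
    Set (Finset (V ⊕ V)) :=
  {ρ | ∃ σ τ : Finset V, σ ∈ K₁ ∧ τ ∈ K₂ ∧ Disjoint σ τ ∧
    ρ = σ.image Sum.inl ∪ τ.image Sum.inr}

/-- The labelling `λ(i) = λ(i') = e_i` for `i ≤ m−1` and `λ(m) = λ(m') = e₁ + ⋯ + e_{m−1}`. -/
def bierLabel (m : ℕ) : Fin m ⊕ Fin m → (Fin (m - 1) → ℤ) :=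
  Sum.elim
    (fun i => if h : (i : ℕ) < m - 1 then Pi.single (⟨(i : ℕ), h⟩ : Fin (m - 1)) (1 : ℤ) else 1)
    (fun i => if h : (i : ℕ) < m - 1 then Pi.single (⟨(i : ℕ), h⟩ : Fin (m - 1)) (1 : ℤ) else 1)

noncomputable def modEquiv (n : ℕ) (j : Fin n) : (Fin n → ℤ) ≃ₗ[ℤ] (Fin n → ℤ) where
  toFun x := x + x j • ((1 : Fin n → ℤ) - Pi.single j 1)
  invFun y := y - y j • ((1 : Fin n → ℤ) - Pi.single j 1)
  map_add' x y := by ext k; simp; ring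
  map_smul' c x := by ext k; simp; ring
  left_inv x := by
    ext k
    by_cases hk : k = j <;> simp [hk, Pi.single_apply]
  right_inv y := by
    ext k
    by_cases hk : k = j <;> simp [hk, Pi.single_apply]

noncomputable def modBasis (n : ℕ) (j : Fin n) : Module.Basis (Fin n) ℤ (Fin n → ℤ) :=
  (Pi.basisFun ℤ (Fin n)).map (modEquiv n j)

lemma modBasis_apply_self (n : ℕ) (j : Fin n) : modBasis n j j = 1 := by
  ext k; simp [modBasis, modEquiv, Pi.single_apply]

lemma modBasis_apply_ne (n : ℕ) (j i : Fin n) (h : i ≠ j) :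
    modBasis n j i = Pi.single i 1 := by
  ext k; simp [modBasis, modEquiv, Pi.single_apply, h]

lemma bierLabel_eq (m : ℕ) (w : Fin m ⊕ Fin m) :
    bierLabel m w = if h : ((Sum.elim id id w : Fin m) : ℕ) < m - 1 then
      Pi.single (⟨_, h⟩ : Fin (m - 1)) (1 : ℤ) else 1 := by
  cases w <;> rfl

/-- if every face of the deleted join of `K₁` and `K₂` has at most `m − 1`
elements, then for every face `ρ`, the family `(λ(w))_{w ∈ ρ}` extends to a `ℤ`-basis
of `ℤ^{m−1}`. -/
theorem deletedJoin_labels_extend_to_basis (m : ℕ) (hm : 2 ≤ m)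
    (K₁ K₂ : Set (Finset (Fin m)))
    (h₁ : IsSimplicialComplex K₁) (h₂ : IsSimplicialComplex K₂)
    (hdim : ∀ ρ ∈ deletedJoin K₁ K₂, ρ.card ≤ m - 1) :
    ∀ ρ ∈ deletedJoin K₁ K₂,
      ∃ b : Module.Basis (Fin (m - 1)) ℤ (Fin (m - 1) → ℤ),
        ∃ g : {w // w ∈ ρ} → Fin (m - 1), Function.Injective g ∧
          ∀ w : {w // w ∈ ρ}, b (g w) = bierLabel m (w : Fin m ⊕ Fin m) := by
  intro ρ hρ
  obtain ⟨σ, τ, hσ, hτ, hdisj, hρeq⟩ := hρ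
  set val : Fin m ⊕ Fin m → Fin m := Sum.elim id id with hval_def
  have hmem : ∀ w ∈ ρ, val w ∈ σ ∪ τ := by
    intro w hw
    rw [hρeq] at hw
    rcases Finset.mem_union.1 hw with h | h <;>
      obtain ⟨i, hi, rfl⟩ := Finset.mem_image.1 h <;> simp [val, Finset.mem_union, hi]
  have hvalinj : ∀ w₁ ∈ ρ, ∀ w₂ ∈ ρ, val w₁ = val w₂ → w₁ = w₂ := by
    intro w₁ hw₁ w₂ hw₂ h
    rw [hρeq] at hw₁ hw₂
    rcases Finset.mem_union.1 hw₁ with h1 | h1 <;> rcases Finset.mem_union.1 hw₂ with h2 | h2 <;>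
      obtain ⟨i, hi, rfl⟩ := Finset.mem_image.1 h1 <;>
      obtain ⟨i', hi', rfl⟩ := Finset.mem_image.1 h2 <;>
      simp [val] at h <;> subst h
    · rfl
    · exact absurd hi' (Finset.disjoint_left.1 hdisj hi)
    · exact absurd hi (Finset.disjoint_left.1 hdisj hi')
    · rfl
  have hcard : (σ ∪ τ).card ≤ m - 1 := by
    have h1 := hdim ρ ⟨σ, τ, hσ, hτ, hdisj, hρeq⟩
    have h2 : ρ.card = σ.card + τ.card := by
      rw [hρeq, Finset.card_union_of_disjoint, Finset.card_image_of_injective _ Sum.inl_injective,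
        Finset.card_image_of_injective _ Sum.inr_injective]
      simp [Finset.disjoint_left]
    calc (σ ∪ τ).card ≤ σ.card + τ.card := Finset.card_union_le _ _
      _ = ρ.card := h2.symm
      _ ≤ m - 1 := h1
  have hm1 : m - 1 < m := by omega
  by_cases hlast : (⟨m - 1, hm1⟩ : Fin m) ∈ σ ∪ τ
  · -- pick j not in σ ∪ τ with value < m - 1
    have hex : ∃ x : Fin m, x ∉ σ ∪ τ := by
      by_contra h
      push_neg at h
      have : (Finset.univ : Finset (Fin m)).card ≤ (σ ∪ τ).card :=
        Finset.card_le_card (fun x _ => h x)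
      simp [Fintype.card_fin] at this
      omega
    obtain ⟨x, hx⟩ := hex
    have hxlt : (x : ℕ) < m - 1 := by
      have hne0 : x ≠ ⟨m - 1, hm1⟩ := fun h => hx (h ▸ hlast)
      have hne : (x : ℕ) ≠ m - 1 := fun h => hne0 (Fin.val_injective h)
      have := x.isLt
      omega
    set j : Fin (m - 1) := ⟨(x : ℕ), hxlt⟩ with hj
    refine ⟨modBasis (m - 1) j,
      fun w => if h : ((val w.1 : Fin m) : ℕ) < m - 1 then ⟨_, h⟩ else j, ?_, ?_⟩
    · intro w₁ w₂ hgw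
      have key : ∀ w : {w // w ∈ ρ}, ¬ ((val w.1 : Fin m) : ℕ) < m - 1 →
          (val w.1 : Fin m) = ⟨m - 1, hm1⟩ := by
        intro w hw
        have := (val w.1).isLt
        exact Fin.val_injective (show ((val w.1 : Fin m) : ℕ) = m - 1 by omega)
      have keylt : ∀ w : {w // w ∈ ρ}, ∀ h : ((val w.1 : Fin m) : ℕ) < m - 1,
          (⟨_, h⟩ : Fin (m - 1)) ≠ j := by
        intro w h heq
        apply hx
        have h2 := congrArg Fin.val heq
        have : (val w.1 : Fin m) = x := Fin.val_injective h2
        exact this ▸ hmem w.1 w.2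
      dsimp only at hgw
      apply Subtype.ext
      apply hvalinj _ w₁.2 _ w₂.2
      by_cases h1 : ((val w₁.1 : Fin m) : ℕ) < m - 1 <;>
        by_cases h2 : ((val w₂.1 : Fin m) : ℕ) < m - 1
      · rw [dif_pos h1, dif_pos h2] at hgw
        have h3 := congrArg Fin.val hgw
        exact Fin.val_injective h3
      · rw [dif_pos h1, dif_neg h2] at hgw
        exact absurd hgw (keylt w₁ h1)
      · rw [dif_neg h1, dif_pos h2] at hgw
        exact absurd hgw.symm (keylt w₂ h2)
      · rw [key w₁ h1, key w₂ h2]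
    · intro w
      dsimp only
      rw [bierLabel_eq]
      by_cases h : ((val w.1 : Fin m) : ℕ) < m - 1
      · rw [dif_pos h, dif_pos h]
        have hne : (⟨_, h⟩ : Fin (m - 1)) ≠ j := by
          intro heq
          apply hx
          have h2 := congrArg Fin.val heq
          have : (val w.1 : Fin m) = x := Fin.val_injective h2
          exact this ▸ hmem w.1 w.2
        exact modBasis_apply_ne _ _ _ hne
      · rw [dif_neg h, dif_neg h]
        exact modBasis_apply_self _ _
  · -- all values < m - 1
    have hlt : ∀ w : {w // w ∈ ρ}, ((val w.1 : Fin m) : ℕ) < m - 1 := by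
      intro w
      have h1 := hmem w.1 w.2
      have h2 := (val w.1).isLt
      have : (val w.1 : Fin m) ≠ ⟨m - 1, hm1⟩ := fun h => hlast (h ▸ h1)
      have hne : ((val w.1 : Fin m) : ℕ) ≠ m - 1 := fun h => this (Fin.ext h)
      omega
    refine ⟨Pi.basisFun ℤ (Fin (m - 1)), fun w => ⟨_, hlt w⟩, ?_, ?_⟩
    · intro w₁ w₂ hgw
      have h3 := congrArg Fin.val hgw
      exact Subtype.ext (hvalinj _ w₁.2 _ w₂.2 (Fin.val_injective h3))
    · intro w
      dsimp only
      rw [bierLabel_eq, dif_pos (hlt w)]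
      simp [Pi.basisFun_apply, val]
end

section
/- Let m ≥ 2 and let K be a simplicial complex on [m] = {1, …, m} with K ≠ 2^{[m]}. Then there exists a ℤ-linear map Λ : ℤ^{[m] ⊔ [m]'} → ℤ^{m−1} (from the free ℤ-module on the 2m-element set [m] ⊔ [m]') such that for every face ρ of the Bier sphere Bier(K), the family of vectors (Λ(e_w))_{w ∈ ρ} can be extended to a ℤ-basis of ℤ^{m−1}. (This is the combinatorial content of the statement that the Buchstaber number of Bier(K) attains its maximal possible value 2m − (m − 1) = m + 1.) -/
/-- The `i`-th vector of the "maximal" characteristic family in `ℤ^{m-1}`: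
`e_i` for `i < m-1`, and `(-1,…,-1)` for the last index. -/
def vvec (m : ℕ) (i : Fin m) : Fin (m - 1) → ℤ :=
  if h : i.val < m - 1 then Pi.single ⟨i.val, h⟩ 1 else fun _ => -1

/-- The involution of `ℤ^n` fixing `e_k` for `k ≠ j` and swapping `e_j` with `(-1,…,-1)`. -/
def alphaMap (n : ℕ) (j : Fin n) : (Fin n → ℤ) →ₗ[ℤ] (Fin n → ℤ) where
  toFun x := fun i => if i = j then -x j else x i - x j
  map_add' x y := by funext i; by_cases h : i = j <;> simp [h] <;> ring
  map_smul' c x := by funext i; by_cases h : i = j <;> simp [h] <;> ring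

lemma alpha_involutive (n : ℕ) (j : Fin n) :
    Function.Involutive (alphaMap n j) := by
  intro x; funext i
  by_cases h : i = j <;> simp [alphaMap, h] <;> ring

def alphaEquiv (n : ℕ) (j : Fin n) : (Fin n → ℤ) ≃ₗ[ℤ] (Fin n → ℤ) :=
  LinearEquiv.ofInvolutive (alphaMap n j) (alpha_involutive n j)

lemma alpha_single (n : ℕ) (j k : Fin n) :
    alphaMap n j (Pi.single k (1 : ℤ)) =
      if k = j then (fun _ => -1) else Pi.single k 1 := by
  funext i
  by_cases hk : k = j
  · subst hk
    by_cases h : i = k <;> simp [alphaMap, h, Pi.single_apply]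
  · by_cases h : i = j
    · subst h
      simp [alphaMap, Pi.single_apply, Ne.symm hk, hk]
    · simp [alphaMap, h, hk, Pi.single_apply]


/-- there is a `ℤ`-linear map `Λ : ℤ^{[m] ⊔ [m]'} → ℤ^{m−1}` such that for
every face `ρ` of the Bier sphere of `K`, the family `(Λ(e_w))_{w ∈ ρ}` extends to a
`ℤ`-basis of `ℤ^{m−1}` (the Buchstaber number of `Bier(K)` is maximal, `m + 1`). -/
theorem bier_buchstaber_maximal (m : ℕ) (hm : 2 ≤ m) (K : Set (Finset (Fin m)))
    (hK : IsSimplicialComplex K) (hne : K ≠ Set.univ) :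
    ∃ Λ : ((Fin m ⊕ Fin m) → ℤ) →ₗ[ℤ] (Fin (m - 1) → ℤ),
      ∀ ρ ∈ bier K,
        ∃ b : Module.Basis (Fin (m - 1)) ℤ (Fin (m - 1) → ℤ),
          ∃ g : {w // w ∈ ρ} → Fin (m - 1), Function.Injective g ∧
            ∀ w : {w // w ∈ ρ},
              b (g w) = Λ (Pi.single ((w : Fin m ⊕ Fin m)) (1 : ℤ)) := by
  classical
  set p : Fin m ⊕ Fin m → Fin m := Sum.elim id id with hp
  refine ⟨(Pi.basisFun ℤ (Fin m ⊕ Fin m)).constr ℤ (fun w => vvec m (p w)), ?_⟩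
  intro ρ hρ
  obtain ⟨σ, τ, hσ, hτ, hd, rfl⟩ := hρ
  -- Λ sends e_w to vvec (p w)
  have hΛ : ∀ w : Fin m ⊕ Fin m,
      ((Pi.basisFun ℤ (Fin m ⊕ Fin m)).constr ℤ (fun w => vvec m (p w)))
        (Pi.single w (1 : ℤ)) = vvec m (p w) := by
    intro w
    rw [← Pi.basisFun_apply ℤ (Fin m ⊕ Fin m) w, Module.Basis.constr_basis]
  -- σ ∪ τ ≠ univ
  have hneq : σ ∪ τ ≠ Finset.univ := by
    intro h
    apply hτ
    apply hK.2 σ hσ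
    intro x hx
    rcases Finset.mem_sdiff.mp hx with ⟨-, hx2⟩
    have := Finset.mem_univ x
    rw [← h] at this
    rcases Finset.mem_union.mp this with h' | h'
    · exact h'
    · exact absurd h' hx2
  obtain ⟨j, hj⟩ : ∃ j : Fin m, j ∉ σ ∪ τ := by
    by_contra h
    push_neg at h
    exact hneq (Finset.eq_univ_iff_forall.mpr h)
  -- membership facts
  have hpmem : ∀ w : Fin m ⊕ Fin m,
      w ∈ σ.image Sum.inl ∪ τ.image Sum.inr → p w ∈ σ ∪ τ := by
    intro w hw
    rcases Finset.mem_union.mp hw with h' | h'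
    · obtain ⟨i, hi, rfl⟩ := Finset.mem_image.mp h'
      exact Finset.mem_union_left _ hi
    · obtain ⟨i, hi, rfl⟩ := Finset.mem_image.mp h'
      exact Finset.mem_union_right _ hi
  have hpne : ∀ w : Fin m ⊕ Fin m,
      w ∈ σ.image Sum.inl ∪ τ.image Sum.inr → p w ≠ j := by
    intro w hw h
    exact hj (h ▸ hpmem w hw)
  have hpinj : ∀ w₁ w₂ : Fin m ⊕ Fin m,
      w₁ ∈ σ.image Sum.inl ∪ τ.image Sum.inr →
      w₂ ∈ σ.image Sum.inl ∪ τ.image Sum.inr → p w₁ = p w₂ → w₁ = w₂ := by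
    intro w₁ w₂ h₁ h₂ hpe
    have mem : ∀ w, w ∈ σ.image Sum.inl ∪ τ.image Sum.inr →
        (∃ i ∈ σ, w = Sum.inl i) ∨ (∃ i ∈ τ, w = Sum.inr i) := by
      intro w hw
      rcases Finset.mem_union.mp hw with h' | h'
      · obtain ⟨i, hi, rfl⟩ := Finset.mem_image.mp h'; exact Or.inl ⟨i, hi, rfl⟩
      · obtain ⟨i, hi, rfl⟩ := Finset.mem_image.mp h'; exact Or.inr ⟨i, hi, rfl⟩
    rcases mem w₁ h₁ with ⟨i₁, hi₁, rfl⟩ | ⟨i₁, hi₁, rfl⟩ <;>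
      rcases mem w₂ h₂ with ⟨i₂, hi₂, rfl⟩ | ⟨i₂, hi₂, rfl⟩ <;>
        simp only [hp, Sum.elim_inl, Sum.elim_inr, id] at hpe <;> subst hpe
    · rfl
    · exact absurd hi₂ (Finset.disjoint_left.mp hd hi₁)
    · exact absurd hi₁ (Finset.disjoint_left.mp hd hi₂)
    · rfl
  by_cases hjlt : j.val < m - 1
  -- Case B: j is not the last vertex; use the basis twisted by `alphaEquiv`.
  · set j' : Fin (m - 1) := ⟨j.val, hjlt⟩ with hj'
    set b : Module.Basis (Fin (m - 1)) ℤ (Fin (m - 1) → ℤ) :=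
      (Pi.basisFun ℤ (Fin (m - 1))).map (alphaEquiv (m - 1) j') with hb
    have hbk : ∀ k : Fin (m - 1),
        b k = if k = j' then (fun _ => -1) else Pi.single k 1 := by
      intro k
      rw [hb, Module.Basis.map_apply, Pi.basisFun_apply]
      exact alpha_single (m - 1) j' k
    refine ⟨b, fun w => if h : (p w.1).val < m - 1 then ⟨(p w.1).val, h⟩ else j', ?_, ?_⟩
    · intro w₁ w₂ hg
      have h₁ := hpmem w₁.1 w₁.2
      have h₂ := hpmem w₂.1 w₂.2
      have hn₁ := hpne w₁.1 w₁.2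
      have hn₂ := hpne w₂.1 w₂.2
      dsimp only at hg
      apply Subtype.ext
      apply hpinj _ _ w₁.2 w₂.2
      by_cases c₁ : (p w₁.1).val < m - 1 <;> by_cases c₂ : (p w₂.1).val < m - 1
      · rw [dif_pos c₁, dif_pos c₂] at hg
        have h' := congrArg Fin.val hg
        exact Fin.ext h'
      · rw [dif_pos c₁, dif_neg c₂] at hg
        have h' := congrArg Fin.val hg
        exact absurd (Fin.ext h' : p w₁.1 = j) hn₁
      · rw [dif_neg c₁, dif_pos c₂] at hg
        have h' := congrArg Fin.val hg
        exact absurd (Fin.ext h'.symm : p w₂.1 = j) hn₂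
      · have e₁ : (p w₁.1).val = m - 1 :=
          le_antisymm (Nat.lt_succ_iff.mp (by omega)) (le_of_not_gt c₁)
        have e₂ : (p w₂.1).val = m - 1 :=
          le_antisymm (Nat.lt_succ_iff.mp (by omega)) (le_of_not_gt c₂)
        exact Fin.ext (e₁.trans e₂.symm)
    · intro w
      dsimp only
      rw [hΛ]
      by_cases c : (p w.1).val < m - 1
      · rw [dif_pos c, hbk]
        have hne' : (⟨(p w.1).val, c⟩ : Fin (m - 1)) ≠ j' := by
          intro h
          have h' := congrArg Fin.val h
          exact hpne w.1 w.2 (Fin.ext h')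
        rw [if_neg hne', vvec, dif_pos c]
      · rw [dif_neg c, hbk, if_pos rfl, vvec, dif_neg c]
  -- Case A: j is the last vertex; the standard basis works.
  · have hjval : j.val = m - 1 := by
      have := j.isLt; omega
    have hlt : ∀ w : Fin m ⊕ Fin m, w ∈ σ.image Sum.inl ∪ τ.image Sum.inr →
        (p w).val < m - 1 := by
      intro w hw
      have h1 := hpne w hw
      have h2 := (p w).isLt
      have : (p w).val ≠ m - 1 := fun h => h1 (Fin.ext (h.trans hjval.symm))
      omega
    refine ⟨Pi.basisFun ℤ (Fin (m - 1)), fun w => ⟨(p w.1).val, hlt w.1 w.2⟩, ?_, ?_⟩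
    · intro w₁ w₂ hg
      dsimp only at hg
      have h' := congrArg Fin.val hg
      exact Subtype.ext (hpinj _ _ w₁.2 w₂.2 (Fin.ext h'))
    · intro w
      rw [hΛ, Pi.basisFun_apply, vvec, dif_pos (hlt w.1 w.2)]
end
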